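/- Let e₁, e₂, e₃ ∈ ℝ² satisfy e₁ + e₂ + e₃ = 0 with e₁ and e₂ linearly independent, and let S̄ = (s̄₁,s̄₂,s̄₃) ∈ ℝ³ with all s̄ᵢ > 0. Then the 3×3 matrix M(e) = s_D(e)² I₃ − s_D(e) S̄ r(e)ᵀ (Dᵀ + D) + s_N(e) S̄ S̄ᵀ D is singular if and only if there exists k ∈ ℝ such that r(e) = k S̄. -/

import Mathlib

open Matrix

noncomputable section

/-- The plane `ℝ²` with the Euclidean norm. -/
abbrev E2 := EuclideanSpace ℝ (Fin 2)

/-- Oriented incidence matrix of the triangle graph. -/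
def Hmat : Matrix (Fin 3) (Fin 3) ℝ := !![-1, 1, 0; 0, -1, 1; 1, 0, -1]

/-- Expanded incidence matrix `Ĥ = H ⊗ I₂`. -/
def Hhat : Matrix (Fin 3 × Fin 2) (Fin 3 × Fin 2) ℝ :=
  Matrix.kroneckerMap (· * ·) Hmat (1 : Matrix (Fin 2) (Fin 2) ℝ)

/-- `Λ(e) ∈ ℝ^{6×3}`: block-diagonal matrix with `2×1` blocks `e₁, e₂, e₃`. -/
def Lam (e : Fin 3 → E2) : Matrix (Fin 3 × Fin 2) (Fin 3) ℝ :=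
  fun p j => if p.1 = j then e j p.2 else 0

/-- The rigidity matrix `R(e) = Λ(e)ᵀ Ĥ ∈ ℝ^{3×6}`. -/
def Rmat (e : Fin 3 → E2) : Matrix (Fin 3) (Fin 3 × Fin 2) ℝ := (Lam e)ᵀ * Hhat

/-- The rigidity function `r(e)ᵢ = ½‖eᵢ‖²`. -/
def rvec (e : Fin 3 → E2) : Fin 3 → ℝ := fun i => (1 / 2) * ‖e i‖ ^ 2

/-- The matrix `D` built from the desired shape `S̄ = (s̄₁, s̄₂, s̄₃)`. -/
def Dmat (sb : Fin 3 → ℝ) : Matrix (Fin 3) (Fin 3) ℝ :=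
  !![4 * sb 0 + sb 1 + sb 2, sb 1 - sb 2, sb 2 - sb 1;
     sb 0 - sb 2, sb 0 + 4 * sb 1 + sb 2, sb 2 - sb 0;
     sb 0 - sb 1, sb 1 - sb 0, sb 0 + sb 1 + 4 * sb 2]

/-- `s_N(e) = r(e)ᵀ D r(e)`. -/
def sN (sb : Fin 3 → ℝ) (e : Fin 3 → E2) : ℝ := rvec e ⬝ᵥ (Dmat sb *ᵥ rvec e)

/-- `s_D(e) = S̄ᵀ D r(e)`. -/
def sD (sb : Fin 3 → ℝ) (e : Fin 3 → E2) : ℝ := sb ⬝ᵥ (Dmat sb *ᵥ rvec e)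

/-- The time-varying scale function `s̃*(e) = s_N(e)/s_D(e)`. -/
def stilde (sb : Fin 3 → ℝ) (e : Fin 3 → E2) : ℝ := sN sb e / sD sb e

/-- The instantaneous cost `‖R(e)ᵀ (r(e) − θ S̄)‖²` at scale `θ`. -/
def cost (sb : Fin 3 → ℝ) (e : Fin 3 → E2) (θ : ℝ) : ℝ :=
  ((Rmat e)ᵀ *ᵥ (rvec e - θ • sb)) ⬝ᵥ ((Rmat e)ᵀ *ᵥ (rvec e - θ • sb))

/-- The control gain `M(e) = s_D² I₃ − s_D S̄ r(e)ᵀ (Dᵀ + D) + s_N S̄ S̄ᵀ D`. -/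
def Mmat (sb : Fin 3 → ℝ) (e : Fin 3 → E2) : Matrix (Fin 3) (Fin 3) ℝ :=
  (sD sb e) ^ 2 • (1 : Matrix (Fin 3) (Fin 3) ℝ)
    - (sD sb e) • (vecMulVec sb (rvec e) * ((Dmat sb)ᵀ + Dmat sb))
    + (sN sb e) • (vecMulVec sb sb * Dmat sb)

/-- `N(e) = (1/s_D²)(s_D Λ(e)(Dᵀ + D) r(e) − s_N Λ(e) Dᵀ S̄) ∈ ℝ⁶`,
the gradient of the scale function `s̃*`. -/
def Nvec (sb : Fin 3 → ℝ) (e : Fin 3 → E2) : Fin 3 × Fin 2 → ℝ :=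
  (1 / (sD sb e) ^ 2) •
    ((sD sb e) • (Lam e *ᵥ (((Dmat sb)ᵀ + Dmat sb) *ᵥ rvec e))
      - (sN sb e) • (Lam e *ᵥ ((Dmat sb)ᵀ *ᵥ sb)))

end


set_option maxHeartbeats 2000000

private lemma det3_rank_one (c : ℝ) (u v : Fin 3 → ℝ) :
    (c • (1 : Matrix (Fin 3) (Fin 3) ℝ) + Matrix.vecMulVec u v).det
      = c ^ 2 * (c + v ⬝ᵥ u) := by
  simp [Matrix.det_fin_three, Matrix.vecMulVec_apply, Matrix.one_apply, dotProduct,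
    Fin.sum_univ_three]
  ring

private lemma quad_zero (A B C x y : ℝ) (hA : 0 < A) (hD : 0 < 4 * A * C - B ^ 2)
    (hxy : A * x ^ 2 + B * x * y + C * y ^ 2 = 0) : x = 0 ∧ y = 0 := by
  have h1 : (2 * A * x + B * y) ^ 2 + (4 * A * C - B ^ 2) * y ^ 2 = 0 := by
    linear_combination 4 * A * hxy
  have hy : y = 0 := by
    by_contra h
    have h2 : 0 < y ^ 2 := lt_of_le_of_ne (sq_nonneg y) (Ne.symm (pow_ne_zero 2 h))
    nlinarith [sq_nonneg (2 * A * x + B * y), mul_pos hD h2]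
  refine ⟨?_, hy⟩
  rw [hy] at h1
  have h3 : (2 * A * x) ^ 2 = 0 := by linear_combination h1
  have h4 : 2 * A * x = 0 := by
    exact (pow_eq_zero_iff two_ne_zero).mp h3
  rcases mul_eq_zero.mp h4 with h5 | h5
  · linarith
  · exact h5

private lemma aux_forward (r1 r2 r3 p q s : ℝ) (hp : 0 < p) (hq : 0 < q) (hs : 0 < s)
    (hG : (4 * r1 ^ 2 * p + 1 * r1 ^ 2 * q + 1 * r1 ^ 2 * s + 1 * r1 * r2 * p + 1 * r1 * r2 * q - 2 * r1 * r2 * s + 1 * r1 * r3 * p - 2 * r1 * r3 * q + 1 * r1 * r3 * s + 1 * r2 ^ 2 * p + 4 * r2 ^ 2 * q + 1 * r2 ^ 2 * s - 2 * r2 * r3 * p + 1 * r2 * r3 * q + 1 * r2 * r3 * s + 1 * r3 ^ 2 * p + 1 * r3 ^ 2 * q + 4 * r3 ^ 2 * s) * (4 * p ^ 3 + 2 * p ^ 2 * q + 2 * p ^ 2 * s + 2 * p * q ^ 2 - 6 * p * q * s + 2 * p * s ^ 2 + 4 * q ^ 3 + 2 * q ^ 2 * s + 2 * q * s ^ 2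 + 4 * s ^ 3) - (4 * r1 * p ^ 2 + 2 * r1 * p * q + 2 * r1 * p * s - 2 * r1 * q * s + 2 * r2 * p * q - 2 * r2 * p * s + 4 * r2 * q ^ 2 + 2 * r2 * q * s - 2 * r3 * p * q + 2 * r3 * p * s + 2 * r3 * q * s + 4 * r3 * s ^ 2) * (4 * r1 * p ^ 2 + 1 * r1 * p * q + 1 * r1 * p * s + 1 * r1 * q ^ 2 - 2 * r1 * q * s + 1 * r1 * s ^ 2 + 1 * r2 * p ^ 2 + 1 * r2 * p * q - 2 * r2 * p * s + 4 * r2 * q ^ 2 + 1 * r2 * q * s + 1 * r2 * s ^ 2 + 1 * r3 * p ^ 2 - 2 * r3 * p * q + 1 * r3 * p * s + 1 * r3 * q ^ 2 + 1 * r3 * q * s + 4 * r3 * s ^ 2) = 0) :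
    r1 * q - r2 * p = 0 ∧ r1 * s - r3 * p = 0 := by
  have hA : 0 < 4 * p ^ 4 + 16 * p ^ 3 * q + 8 * p ^ 3 * s + 4 * p ^ 2 * q ^ 2 + 8 * p ^ 2 * q * s - 8 * p * q ^ 2 * s + 8 * p * q * s ^ 2 + 8 * p * s ^ 3 + 4 * q ^ 2 * s ^ 2 + 16 * q * s ^ 3 + 4 * s ^ 4 := by
    linarith [sq_nonneg (q * (p - s)), pow_pos hp 4,
      mul_pos (pow_pos hp 3) hq, mul_pos (pow_pos hp 3) hs,
      mul_pos (mul_pos (pow_pos hp 2) hq) hs,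
      mul_pos (mul_pos hp hq) (pow_pos hs 2),
      mul_pos hp (pow_pos hs 3), mul_pos hq (pow_pos hs 3), pow_pos hs 4]
  have hD : 0 < 4 * (4 * p ^ 4 + 16 * p ^ 3 * q + 8 * p ^ 3 * s + 4 * p ^ 2 * q ^ 2 + 8 * p ^ 2 * q * s - 8 * p * q ^ 2 * s + 8 * p * q * s ^ 2 + 8 * p * s ^ 3 + 4 * q ^ 2 * s ^ 2 + 16 * q * s ^ 3 + 4 * s ^ 4) * (4 * p ^ 4 + 8 * p ^ 3 * q + 16 * p ^ 3 * s + 8 * p ^ 2 * q * s + 4 * p ^ 2 * s ^ 2 + 8 * p * q ^ 3 + 8 * p * q ^ 2 * s - 8 * p * q * s ^ 2 + 4 * q ^ 4 + 16 * q ^ 3 * s + 4 * q ^ 2 * s ^ 2) - (- 8 * p ^ 4 + 8 * p * q ^ 3 - 16 * p * q ^ 2 * s - 16 * p * q * s ^ 2 + 8 * p * s ^ 3 - 8 * q ^ 3 * s - 32 * q ^ 2 * s ^ 2 - 8 * q * s ^ 3) ^ 2 := by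
    linarith [mul_nonneg (mul_pos (mul_pos (pow_pos hp 4) hq) hs).le (sq_nonneg (q - s)),
      (mul_pos (mul_pos (pow_pos hp 2) (pow_pos hq 2)) (pow_pos hs 4)), (mul_pos (mul_pos (pow_pos hp 2) (pow_pos hq 3)) (pow_pos hs 3)), (mul_pos (mul_pos (pow_pos hp 2) (pow_pos hq 4)) (pow_pos hs 2)), (mul_pos (mul_pos (pow_pos hp 2) (pow_pos hq 5)) hs), (mul_pos (mul_pos (pow_pos hp 2) hq) (pow_pos hs 5)), (mul_pos (mul_pos (pow_pos hp 3) (pow_pos hq 2)) (pow_pos hs 3)), (mul_pos (mul_pos (pow_pos hp 3) (pow_pos hq 3)) (pow_pos hs 2)), (mul_pos (mul_pos (pow_pos hp 3) (pow_pos hq 4)) hs), (mul_pos (mul_pos (pow_pos hp 3) hq) (pow_pos hs 4)), (mul_pos (mul_pos (pow_pos hp 4) (pow_pos hq 2)) (pow_pos hs 2)), (mul_pos (mul_pos (pow_pos hp 5) (pow_pos hq 2)) hs), (mul_pos (mul_pos (pow_pos hp 5) hq) (pow_pos hs 2)), (mul_pos (mul_pos (pow_pos hp 6) hq) hs), (mul_pos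 (pow_pos hp 3) (pow_pos hq 5)), (mul_pos (pow_pos hp 3) (pow_pos hs 5)), (mul_pos (pow_pos hp 4) (pow_pos hq 4)), (mul_pos (pow_pos hp 4) (pow_pos hs 4)), (mul_pos (pow_pos hp 5) (pow_pos hq 3)), (mul_pos (pow_pos hp 5) (pow_pos hs 3)), (mul_pos (pow_pos hp 6) (pow_pos hq 2)), (mul_pos (pow_pos hp 6) (pow_pos hs 2)), (mul_pos (pow_pos hp 7) hq), (mul_pos (pow_pos hp 7) hs)]
  have hxy : (4 * p ^ 4 + 16 * p ^ 3 * q + 8 * p ^ 3 * s + 4 * p ^ 2 * q ^ 2 + 8 * p ^ 2 * q * s - 8 * p * q ^ 2 * s + 8 * p * q * s ^ 2 + 8 * p * s ^ 3 + 4 * q ^ 2 * s ^ 2 + 16 * q * s ^ 3 + 4 * s ^ 4) * (r1 * q - r2 * p) ^ 2 + (- 8 * p ^ 4 + 8 * p * q ^ 3 - 16 * p * q ^ 2 * s - 16 * p * q * s ^ 2 + 8 * p * s ^ 3 - 8 * q ^ 3 * s - 32 * q ^ 2 * s ^ 2 - 8 * q * s ^ 3) * (r1 * q - r2 * p) * (r1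 * s - r3 * p)
      + (4 * p ^ 4 + 8 * p ^ 3 * q + 16 * p ^ 3 * s + 8 * p ^ 2 * q * s + 4 * p ^ 2 * s ^ 2 + 8 * p * q ^ 3 + 8 * p * q ^ 2 * s - 8 * p * q * s ^ 2 + 4 * q ^ 4 + 16 * q ^ 3 * s + 4 * q ^ 2 * s ^ 2) * (r1 * s - r3 * p) ^ 2 = 0 := by
    linear_combination p ^ 2 * hG
  exact quad_zero _ _ _ _ _ hA hD hxy

/-- For a non-collinear closed triangle and a shape `S̄` with
positive entries, the gain matrix `M(e)` is singular if and only if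
`r(e) = k S̄` for some `k ∈ ℝ` (i.e. the triangle is similar to the shape). -/
theorem M_singular_iff_similar (e : Fin 3 → E2) (hsum : e 0 + e 1 + e 2 = 0)
    (hind : LinearIndependent ℝ ![e 0, e 1])
    (sb : Fin 3 → ℝ) (hsb : ∀ i, 0 < sb i) :
    (Mmat sb e).det = 0 ↔ ∃ k : ℝ, rvec e = k • sb := by
  have hp := hsb 0
  have hq := hsb 1
  have hs := hsb 2
  have h2c : ∀ j, e 2 j = -(e 0 j + e 1 j) := by
    intro j
    have h := congrArg (fun v => v j) hsum
    simp only [PiLp.add_apply, PiLp.zero_apply] at h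
    linarith
  have hnorm : ∀ i, ‖e i‖ ^ 2 = (e i 0) ^ 2 + (e i 1) ^ 2 := by
    intro i
    rw [EuclideanSpace.norm_eq, Real.sq_sqrt (by positivity)]
    simp [Fin.sum_univ_two, sq_abs]
  have hr1 : rvec e 0 = ((e 0 0) ^ 2 + (e 0 1) ^ 2) / 2 := by
    simp only [rvec]; rw [hnorm 0]; ring
  have hr2 : rvec e 1 = ((e 1 0) ^ 2 + (e 1 1) ^ 2) / 2 := by
    simp only [rvec]; rw [hnorm 1]; ring
  have hr3 : rvec e 2 = ((e 0 0 + e 1 0) ^ 2 + (e 0 1 + e 1 1) ^ 2) / 2 := by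
    simp only [rvec]; rw [hnorm 2, h2c 0, h2c 1]; ring
  have hdet2 : e 0 0 * e 1 1 - e 0 1 * e 1 0 ≠ 0 := by
    rw [LinearIndependent.pair_iff] at hind
    intro hcon
    by_cases ha : e 0 0 = 0 ∧ e 0 1 = 0
    · have h0 : (1 : ℝ) • e 0 + (0 : ℝ) • e 1 = 0 := by
        ext j
        fin_cases j <;> simp [ha.1, ha.2]
      exact one_ne_zero (hind 1 0 h0).1
    · rcases not_and_or.mp ha with ha0 | ha1
      · have h0 : (e 1 0) • e 0 + (-(e 0 0)) • e 1 = 0 := by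
          ext j
          fin_cases j <;> simp <;> ring_nf <;> linarith [hcon]
        exact ha0 (by have := (hind _ _ h0).2; linarith [neg_eq_zero.mp this])
      · have h0 : (e 1 1) • e 0 + (-(e 0 1)) • e 1 = 0 := by
          ext j
          fin_cases j <;> simp <;> ring_nf <;> linarith [hcon]
        exact ha1 (by have := (hind _ _ h0).2; linarith [neg_eq_zero.mp this])
  have h1pos : 0 < (sb 0 * e 0 0 - sb 1 * e 1 0) ^ 2 + (sb 0 * e 0 1 - sb 1 * e 1 1) ^ 2 := by
    rcases eq_or_ne (sb 0 * e 0 0 - sb 1 * e 1 0) 0 with hz | hz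
    · rcases eq_or_ne (sb 0 * e 0 1 - sb 1 * e 1 1) 0 with hz2 | hz2
      · exfalso
        apply hdet2
        have hpq : sb 0 * sb 1 ≠ 0 := ne_of_gt (mul_pos hp hq)
        have hkey : sb 0 * sb 1 * (e 0 0 * e 1 1 - e 0 1 * e 1 0) = 0 := by
          linear_combination (sb 1 * e 1 1) * hz - (sb 1 * e 1 0) * hz2
        exact (mul_eq_zero.mp hkey).resolve_left hpq
      · have := lt_of_le_of_ne (sq_nonneg (sb 0 * e 0 1 - sb 1 * e 1 1))
          (Ne.symm (pow_ne_zero 2 hz2))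
        nlinarith [sq_nonneg (sb 0 * e 0 0 - sb 1 * e 1 0)]
    · have := lt_of_le_of_ne (sq_nonneg (sb 0 * e 0 0 - sb 1 * e 1 0))
        (Ne.symm (pow_ne_zero 2 hz))
      nlinarith [sq_nonneg (sb 0 * e 0 1 - sb 1 * e 1 1)]
  have hsd : sD sb e = 4 * (rvec e 0) * (sb 0) ^ 2 + 2 * (rvec e 0) * (sb 0) * (sb 1) + 2 * (rvec e 0) * (sb 0) * (sb 2) - 2 * (rvec e 0) * (sb 1) * (sb 2) + 2 * (rvec e 1) * (sb 0) * (sb 1) - 2 * (rvec e 1) * (sb 0) * (sb 2) + 4 * (rvec e 1) * (sb 1) ^ 2 + 2 * (rvec e 1) * (sb 1) * (sb 2) - 2 * (rvec e 2) * (sb 0) * (sb 1) + 2 * (rvec e 2) * (sb 0) * (sb 2) + 2 * (rvec e 2) * (sb 1) * (sb 2) + 4 * (rvec e 2) * (sb 2) ^ 2 := by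
    simp [sD, Dmat, Matrix.mulVec, dotProduct, Fin.sum_univ_three]
    ring
  have hsdpos : 0 < sD sb e := by
    rw [hsd, hr1, hr2, hr3]
    linarith [h1pos, sq_nonneg (sb 1 * e 1 0 + sb 2 * (e 0 0 + e 1 0)),
      sq_nonneg (sb 1 * e 1 1 + sb 2 * (e 0 1 + e 1 1)),
      sq_nonneg (sb 2 * (e 0 0 + e 1 0) + sb 0 * e 0 0),
      sq_nonneg (sb 2 * (e 0 1 + e 1 1) + sb 0 * e 0 1)]
  have hsn : sN sb e = 4 * (rvec e 0) ^ 2 * (sb 0) + 1 * (rvec e 0) ^ 2 * (sb 1) + 1 * (rvec e 0) ^ 2 * (sb 2) + 1 * (rvec e 0) * (rvec e 1) * (sb 0) + 1 * (rvec e 0) * (rvec e 1) * (sb 1) - 2 * (rvec e 0) * (rvec e 1) * (sb 2) + 1 * (rvec e 0) * (rvec e 2) * (sb 0) - 2 * (rvec e 0) * (rvec e 2) * (sb 1) + 1 * (rvec e 0) * (rvec e 2) * (sb 2) + 1 * (rvec e 1) ^ 2 * (sb 0) + 4 * (rvec e 1) ^ 2 * (sb 1) + 1 * (rvec e 1) ^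 2 * (sb 2) - 2 * (rvec e 1) * (rvec e 2) * (sb 0) + 1 * (rvec e 1) * (rvec e 2) * (sb 1) + 1 * (rvec e 1) * (rvec e 2) * (sb 2) + 1 * (rvec e 2) ^ 2 * (sb 0) + 1 * (rvec e 2) ^ 2 * (sb 1) + 4 * (rvec e 2) ^ 2 * (sb 2) := by
    simp [sN, Dmat, Matrix.mulVec, dotProduct, Fin.sum_univ_three]
    ring
  have hDD : (Dmat sb)ᵀ + Dmat sb =
      !![2 * (4 * sb 0 + sb 1 + sb 2), sb 0 + sb 1 - 2 * sb 2, sb 0 + sb 2 - 2 * sb 1;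
         sb 0 + sb 1 - 2 * sb 2, 2 * (sb 0 + 4 * sb 1 + sb 2), sb 1 + sb 2 - 2 * sb 0;
         sb 0 + sb 2 - 2 * sb 1, sb 1 + sb 2 - 2 * sb 0, 2 * (sb 0 + sb 1 + 4 * sb 2)] := by
    ext i j
    fin_cases i <;> fin_cases j <;> (simp [Dmat, Matrix.vecHead, Matrix.vecTail, Matrix.transpose_apply]; try ring)
  have hM : Mmat sb e = (sD sb e) ^ 2 • (1 : Matrix (Fin 3) (Fin 3) ℝ) +
      Matrix.vecMulVec sb (fun j => sN sb e * (sb ᵥ* Dmat sb) j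
        - sD sb e * (rvec e ᵥ* !![2 * (4 * sb 0 + sb 1 + sb 2), sb 0 + sb 1 - 2 * sb 2, sb 0 + sb 2 - 2 * sb 1;
         sb 0 + sb 1 - 2 * sb 2, 2 * (sb 0 + 4 * sb 1 + sb 2), sb 1 + sb 2 - 2 * sb 0;
         sb 0 + sb 2 - 2 * sb 1, sb 1 + sb 2 - 2 * sb 0, 2 * (sb 0 + sb 1 + 4 * sb 2)]) j) := by
    simp only [Mmat]
    rw [hDD]
    ext i j
    fin_cases i <;> fin_cases j <;>
      (simp [Matrix.vecMulVec_apply, Matrix.mul_apply, Matrix.vecMul, dotProduct,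
        Fin.sum_univ_three, Dmat, Matrix.one_apply]; ring)
  have hdet : (Mmat sb e).det = ((sD sb e) ^ 2) ^ 2 *
      ((4 * (rvec e 0) ^ 2 * (sb 0) + 1 * (rvec e 0) ^ 2 * (sb 1) + 1 * (rvec e 0) ^ 2 * (sb 2) + 1 * (rvec e 0) * (rvec e 1) * (sb 0) + 1 * (rvec e 0) * (rvec e 1) * (sb 1) - 2 * (rvec e 0) * (rvec e 1) * (sb 2) + 1 * (rvec e 0) * (rvec e 2) * (sb 0) - 2 * (rvec e 0) * (rvec e 2) * (sb 1) + 1 * (rvec e 0) * (rvec e 2) * (sb 2) + 1 * (rvec e 1) ^ 2 * (sb 0) + 4 * (rvec e 1) ^ 2 * (sb 1) + 1 * (rvec e 1) ^ 2 * (sb 2) - 2 * (rvec e 1) * (rvec e 2) * (sb 0) + 1 * (rvec e 1) * (rvec e 2) * (sb 1) + 1 * (rvec e 1) * (rvec e 2) * (sb 2) + 1 * (rvec e 2) ^ 2 * (sb 0) + 1 * (rvec e 2) ^ 2 * (sb 1) + 4 * (rvec e 2) ^ 2 * (sb 2)) * (4 * (sb 0) ^ 3 + 2 * (sb 0) ^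 2 * (sb 1) + 2 * (sb 0) ^ 2 * (sb 2) + 2 * (sb 0) * (sb 1) ^ 2 - 6 * (sb 0) * (sb 1) * (sb 2) + 2 * (sb 0) * (sb 2) ^ 2 + 4 * (sb 1) ^ 3 + 2 * (sb 1) ^ 2 * (sb 2) + 2 * (sb 1) * (sb 2) ^ 2 + 4 * (sb 2) ^ 3) - (4 * (rvec e 0) * (sb 0) ^ 2 + 2 * (rvec e 0) * (sb 0) * (sb 1) + 2 * (rvec e 0) * (sb 0) * (sb 2) - 2 * (rvec e 0) * (sb 1) * (sb 2) + 2 * (rvec e 1) * (sb 0) * (sb 1) - 2 * (rvec e 1) * (sb 0) * (sb 2) + 4 * (rvec e 1) * (sb 1) ^ 2 + 2 * (rvec e 1) * (sb 1) * (sb 2) - 2 * (rvec e 2) * (sb 0) * (sb 1) + 2 * (rvec e 2) * (sb 0) * (sb 2) + 2 * (rvec e 2) * (sb 1) * (sb 2) + 4 * (rvec e 2) * (sb 2) ^ 2) * (4 * (rvec e 0) * (sb 0) ^ 2 + 1 * (rvec e 0) * (sb 0) * (sb 1) + 1 * (rvec e 0) * (sb 0) * (sb 2) + 1 * (rvec e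 0) * (sb 1) ^ 2 - 2 * (rvec e 0) * (sb 1) * (sb 2) + 1 * (rvec e 0) * (sb 2) ^ 2 + 1 * (rvec e 1) * (sb 0) ^ 2 + 1 * (rvec e 1) * (sb 0) * (sb 1) - 2 * (rvec e 1) * (sb 0) * (sb 2) + 4 * (rvec e 1) * (sb 1) ^ 2 + 1 * (rvec e 1) * (sb 1) * (sb 2) + 1 * (rvec e 1) * (sb 2) ^ 2 + 1 * (rvec e 2) * (sb 0) ^ 2 - 2 * (rvec e 2) * (sb 0) * (sb 1) + 1 * (rvec e 2) * (sb 0) * (sb 2) + 1 * (rvec e 2) * (sb 1) ^ 2 + 1 * (rvec e 2) * (sb 1) * (sb 2) + 4 * (rvec e 2) * (sb 2) ^ 2)) := by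
    rw [hM, det3_rank_one]
    congr 1
    simp [dotProduct, Matrix.vecMul, Dmat, Fin.sum_univ_three, Matrix.transpose_apply,
      Matrix.add_apply]
    rw [hsd, hsn]
    ring
  constructor
  · intro h0
    rw [hdet] at h0
    have hG : (4 * (rvec e 0) ^ 2 * (sb 0) + 1 * (rvec e 0) ^ 2 * (sb 1) + 1 * (rvec e 0) ^ 2 * (sb 2) + 1 * (rvec e 0) * (rvec e 1) * (sb 0) + 1 * (rvec e 0) * (rvec e 1) * (sb 1) - 2 * (rvec e 0) * (rvec e 1) * (sb 2) + 1 * (rvec e 0) * (rvec e 2) * (sb 0) - 2 * (rvec e 0) * (rvec e 2) * (sb 1) + 1 * (rvec e 0) * (rvec e 2) * (sb 2) + 1 * (rvec e 1) ^ 2 * (sb 0) + 4 * (rvec e 1) ^ 2 * (sb 1) + 1 * (rvec e 1) ^ 2 * (sb 2) - 2 * (rvec e 1) * (rvec e 2) * (sb 0) + 1 * (rvec e 1) * (rvec e 2) * (sb 1) + 1 * (rvec e 1) * (rvec e 2) * (sb 2) + 1 * (rvec e 2) ^ 2 * (sb 0) + 1 * (rvec e 2) ^ 2 * (sb 1) +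 4 * (rvec e 2) ^ 2 * (sb 2)) * (4 * (sb 0) ^ 3 + 2 * (sb 0) ^ 2 * (sb 1) + 2 * (sb 0) ^ 2 * (sb 2) + 2 * (sb 0) * (sb 1) ^ 2 - 6 * (sb 0) * (sb 1) * (sb 2) + 2 * (sb 0) * (sb 2) ^ 2 + 4 * (sb 1) ^ 3 + 2 * (sb 1) ^ 2 * (sb 2) + 2 * (sb 1) * (sb 2) ^ 2 + 4 * (sb 2) ^ 3) - (4 * (rvec e 0) * (sb 0) ^ 2 + 2 * (rvec e 0) * (sb 0) * (sb 1) + 2 * (rvec e 0) * (sb 0) * (sb 2) - 2 * (rvec e 0) * (sb 1) * (sb 2) + 2 * (rvec e 1) * (sb 0) * (sb 1) - 2 * (rvec e 1) * (sb 0) * (sb 2) + 4 * (rvec e 1) * (sb 1) ^ 2 + 2 * (rvec e 1) * (sb 1) * (sb 2) - 2 * (rvec e 2) * (sb 0) * (sb 1) + 2 * (rvec e 2) * (sb 0) * (sb 2) + 2 * (rvec e 2) * (sb 1) * (sb 2) + 4 * (rvec e 2) * (sb 2) ^ 2) * (4 * (rvec e 0) * (sb 0) ^ 2 + 1 * (rvec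 e 0) * (sb 0) * (sb 1) + 1 * (rvec e 0) * (sb 0) * (sb 2) + 1 * (rvec e 0) * (sb 1) ^ 2 - 2 * (rvec e 0) * (sb 1) * (sb 2) + 1 * (rvec e 0) * (sb 2) ^ 2 + 1 * (rvec e 1) * (sb 0) ^ 2 + 1 * (rvec e 1) * (sb 0) * (sb 1) - 2 * (rvec e 1) * (sb 0) * (sb 2) + 4 * (rvec e 1) * (sb 1) ^ 2 + 1 * (rvec e 1) * (sb 1) * (sb 2) + 1 * (rvec e 1) * (sb 2) ^ 2 + 1 * (rvec e 2) * (sb 0) ^ 2 - 2 * (rvec e 2) * (sb 0) * (sb 1) + 1 * (rvec e 2) * (sb 0) * (sb 2) + 1 * (rvec e 2) * (sb 1) ^ 2 + 1 * (rvec e 2) * (sb 1) * (sb 2) + 4 * (rvec e 2) * (sb 2) ^ 2) = 0 := by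
      rcases mul_eq_zero.mp h0 with h | h
      · exact absurd h (pow_ne_zero 2 (pow_ne_zero 2 (ne_of_gt hsdpos)))
      · exact h
    obtain ⟨hx, hy⟩ := aux_forward (rvec e 0) (rvec e 1) (rvec e 2) (sb 0) (sb 1) (sb 2)
      hp hq hs hG
    refine ⟨rvec e 0 / sb 0, ?_⟩
    funext i
    fin_cases i
    · show rvec e 0 = (rvec e 0 / sb 0) • sb 0
      rw [smul_eq_mul]
      field_simp
    · show rvec e 1 = (rvec e 0 / sb 0) • sb 1
      rw [smul_eq_mul, div_mul_eq_mul_div, eq_comm, div_eq_iff (ne_of_gt hp)]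
      linear_combination hx
    · show rvec e 2 = (rvec e 0 / sb 0) • sb 2
      rw [smul_eq_mul, div_mul_eq_mul_div, eq_comm, div_eq_iff (ne_of_gt hp)]
      linear_combination hy
  · rintro ⟨k, hk⟩
    have hki : ∀ i, rvec e i = k * sb i := fun i => by rw [hk]; simp
    rw [hdet, hki 0, hki 1, hki 2]
    ring
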